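/- For every α ∈ (1,2) and every integer n ≥ 1, the symmetric Toeplitz matrix G_n^{(α)} is negative definite, i.e., x^T G_n^{(α)} x < 0 for every nonzero vector x ∈ ℝ^n. -/

import Mathlib

/-- Grünwald–Letnikov coefficients: `g α 0 = 1`,
`g α l = (1 - (α+1)/l) * g α (l-1)` for `l ≥ 1`. -/
noncomputable def g (α : ℝ) : ℕ → ℝ
  | 0 => 1
  | l + 1 => (1 - (α + 1) / ((l : ℝ) + 1)) * g α l


/-- First column (Toeplitz symbol) of `G_n^{(α)}`: entry at distance `d` is
`2 g₁` if `d = 0`, `g₀ + g₂` if `d = 1`, and `g_{d+1}` if `d ≥ 2`. -/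
noncomputable def gSymb (α : ℝ) : ℕ → ℝ
  | 0 => 2 * g α 1
  | 1 => g α 0 + g α 2
  | d + 2 => g α (d + 3)

/-- The symmetric Toeplitz matrix `G_n^{(α)}`. -/
noncomputable def Gmat (α : ℝ) (n : ℕ) : Matrix (Fin n) (Fin n) ℝ :=
  Matrix.of fun i j => gSymb α (((i : ℤ) - (j : ℤ)).natAbs)

lemma g_one (α : ℝ) : g α 1 = -α := by simp [g]

lemma g_pos {α : ℝ} (hα₁ : 1 < α) (hα₂ : α < 2) : ∀ l, 2 ≤ l → 0 < g α l := by
  intro l hl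
  induction l with
  | zero => omega
  | succ k ih =>
    rcases Nat.lt_or_ge k 2 with hk | hk
    · interval_cases k
      · omega
      · show 0 < (1 - (α+1)/((1:ℕ)+1)) * g α 1
        rw [g_one]; push_cast; nlinarith
    · show 0 < (1 - (α+1)/((k:ℝ)+1)) * g α k
      have hk3 : (3:ℝ) ≤ (k:ℝ)+1 := by exact_mod_cast Nat.succ_le_succ hk
      have : 0 < 1 - (α+1)/((k:ℝ)+1) := by
        rw [sub_pos, div_lt_one (by linarith)]; linarith
      exact mul_pos this (ih hk)

lemma gSymb_pos {α : ℝ} (hα₁ : 1 < α) (hα₂ : α < 2) :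
    ∀ d, 1 ≤ d → 0 < gSymb α d := by
  intro d hd
  match d, hd with
  | 1, _ =>
    have := g_pos hα₁ hα₂ 2 le_rfl
    show 0 < (1:ℝ) + g α 2
    linarith
  | (k+2), _ => exact g_pos hα₁ hα₂ (k+3) (by omega)

lemma h_neg {α : ℝ} (hα₁ : 1 < α) (hα₂ : α < 2) : ∀ N, 1 ≤ N → g (α-1) N < 0 := by
  intro N hN
  induction N with
  | zero => omega
  | succ k ih =>
    rcases Nat.eq_zero_or_pos k with hk | hk
    · subst hk
      show (1 - (α-1+1)/((0:ℕ)+1)) * g (α-1) 0 < 0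
      simp [g]; linarith
    · show (1 - (α-1+1)/((k:ℝ)+1)) * g (α-1) k < 0
      have hk2 : (2:ℝ) ≤ (k:ℝ)+1 := by exact_mod_cast Nat.succ_le_succ hk
      have : 0 < 1 - (α-1+1)/((k:ℝ)+1) := by
        rw [sub_pos, div_lt_one (by linarith)]; linarith
      exact mul_neg_of_pos_of_neg this (ih hk)

lemma key {α : ℝ} (hα₁ : 1 < α) : ∀ N : ℕ, g α (N+1) = -(α/((N:ℝ)+1)) * g (α-1) N := by
  intro N
  induction N with
  | zero => norm_num [g]
  | succ k ih =>
    have h1 : ((k:ℝ)+1) ≠ 0 := by positivity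
    have h2 : ((k:ℝ)+2) ≠ 0 := by positivity
    simp only [g] at ih ⊢
    push_cast at ih ⊢
    field_simp at ih ⊢
    nlinarith [ih]

lemma gSymb_of_ge (α : ℝ) (d : ℕ) (hd : 2 ≤ d) : gSymb α d = g α (d+1) := by
  obtain ⟨k, rfl⟩ : ∃ k, d = k + 2 := ⟨d - 2, by omega⟩
  rfl

lemma Usum {α : ℝ} (hα₁ : 1 < α) : ∀ m, 1 ≤ m →
    ∑ d ∈ Finset.Icc 1 m, gSymb α d = α + g (α-1) (m+1) := by
  intro m hm
  induction m with
  | zero => omega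
  | succ k ih =>
    rcases Nat.eq_zero_or_pos k with hk | hk
    · subst hk
      show ∑ d ∈ Finset.Icc 1 1, gSymb α d = α + g (α-1) 2
      rw [Finset.Icc_self, Finset.sum_singleton]
      show g α 0 + g α 2 = _
      norm_num [g]; ring
    · have hins : Finset.Icc 1 (k+1) = insert (k+1) (Finset.Icc 1 k) := by
        ext x; simp [Finset.mem_Icc, Finset.mem_insert]; omega
      rw [hins, Finset.sum_insert (by simp), ih hk,
        gSymb_of_ge α (k+1) (by omega)]
      have hkey := key hα₁ (k+1)
      have : g (α-1) (k+2) = (1 - α/((k:ℝ)+1+1)) * g (α-1) (k+1) := by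
        show g (α-1) (k+1+1) = _
        simp only [g]; push_cast; ring_nf
      rw [this, hkey]
      push_cast
      ring

lemma U_lt {α : ℝ} (hα₁ : 1 < α) (hα₂ : α < 2) (m : ℕ) :
    ∑ d ∈ Finset.Icc 1 m, gSymb α d < α := by
  rcases Nat.eq_zero_or_pos m with hm | hm
  · subst hm; simp; linarith
  · rw [Usum hα₁ m hm]
    have := h_neg hα₁ hα₂ (m+1) (by omega)
    linarith

lemma side_bound {α : ℝ} (hα₁ : 1 < α) (hα₂ : α < 2) {n : ℕ} (s : Finset (Fin n))
    (dist : Fin n → ℕ) (hinj : ∀ x ∈ s, ∀ y ∈ s, dist x = dist y → x = y)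
    (hmem : ∀ j ∈ s, dist j ∈ Finset.Icc 1 (n-1)) :
    ∑ j ∈ s, gSymb α (dist j) ≤ ∑ d ∈ Finset.Icc 1 (n-1), gSymb α d := by
  rw [← Finset.sum_image hinj]
  apply Finset.sum_le_sum_of_subset_of_nonneg
  · intro d hd; obtain ⟨j, hj, rfl⟩ := Finset.mem_image.1 hd; exact hmem j hj
  · intro d hd _; exact (gSymb_pos hα₁ hα₂ d (Finset.mem_Icc.1 hd).1).le

lemma row_neg {α : ℝ} (hα₁ : 1 < α) (hα₂ : α < 2) {n : ℕ} (i : Fin n) :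
    ∑ j : Fin n, gSymb α (((i:ℤ) - (j:ℤ)).natAbs) < 0 := by
  have hU := U_lt hα₁ hα₂ (n-1)
  have hiLt : i.val < n := i.isLt
  have herase : ∑ j ∈ Finset.univ.erase i, gSymb α (((i:ℤ) - (j:ℤ)).natAbs)
      + gSymb α (((i:ℤ) - (i:ℤ)).natAbs)
      = ∑ j : Fin n, gSymb α (((i:ℤ) - (j:ℤ)).natAbs) :=
    Finset.sum_erase_add Finset.univ _ (Finset.mem_univ i)
  have hdiag : gSymb α (((i:ℤ) - (i:ℤ)).natAbs) = 2 * g α 1 := by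
    simp [gSymb]
  have hsplit : ∑ j ∈ (Finset.univ.erase i).filter (fun j => j.val < i.val),
        gSymb α (((i:ℤ) - (j:ℤ)).natAbs)
      + ∑ j ∈ (Finset.univ.erase i).filter (fun j => ¬ j.val < i.val),
        gSymb α (((i:ℤ) - (j:ℤ)).natAbs)
      = ∑ j ∈ Finset.univ.erase i, gSymb α (((i:ℤ) - (j:ℤ)).natAbs) :=
    Finset.sum_filter_add_sum_filter_not (Finset.univ.erase i) _ _
  have hL : ∑ j ∈ (Finset.univ.erase i).filter (fun j => j.val < i.val),
      gSymb α (((i:ℤ) - (j:ℤ)).natAbs) ≤ ∑ d ∈ Finset.Icc 1 (n-1), gSymb α d := by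
    have hcongr : ∀ j ∈ (Finset.univ.erase i).filter (fun j => j.val < i.val),
        gSymb α (((i:ℤ) - (j:ℤ)).natAbs) = gSymb α (i.val - j.val) := by
      intro j hj
      have hji : j.val < i.val := (Finset.mem_filter.1 hj).2
      congr 1
      omega
    rw [Finset.sum_congr rfl hcongr]
    apply side_bound hα₁ hα₂
    · intro x hx y hy hxy
      have hx' : x.val < i.val := (Finset.mem_filter.1 hx).2
      have hy' : y.val < i.val := (Finset.mem_filter.1 hy).2
      exact Fin.ext (by omega)
    · intro j hj
      have hji : j.val < i.val := (Finset.mem_filter.1 hj).2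
      rw [Finset.mem_Icc]; omega
  have hH : ∑ j ∈ (Finset.univ.erase i).filter (fun j => ¬ j.val < i.val),
      gSymb α (((i:ℤ) - (j:ℤ)).natAbs) ≤ ∑ d ∈ Finset.Icc 1 (n-1), gSymb α d := by
    have hcongr : ∀ j ∈ (Finset.univ.erase i).filter (fun j => ¬ j.val < i.val),
        gSymb α (((i:ℤ) - (j:ℤ)).natAbs) = gSymb α (j.val - i.val) := by
      intro j hj
      have hji : ¬ j.val < i.val := (Finset.mem_filter.1 hj).2
      congr 1
      omega
    rw [Finset.sum_congr rfl hcongr]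
    apply side_bound hα₁ hα₂
    · intro x hx y hy hxy
      have hx' : ¬ x.val < i.val := (Finset.mem_filter.1 hx).2
      have hy' : ¬ y.val < i.val := (Finset.mem_filter.1 hy).2
      have hx2 : x ≠ i := Finset.ne_of_mem_erase (Finset.mem_filter.1 hx).1
      have hy2 : y ≠ i := Finset.ne_of_mem_erase (Finset.mem_filter.1 hy).1
      have hx3 : x.val ≠ i.val := fun h => hx2 (Fin.ext h)
      have hy3 : y.val ≠ i.val := fun h => hy2 (Fin.ext h)
      exact Fin.ext (by omega)
    · intro j hj
      have hji : ¬ j.val < i.val := (Finset.mem_filter.1 hj).2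
      have hj2 : j ≠ i := Finset.ne_of_mem_erase (Finset.mem_filter.1 hj).1
      have hj3 : j.val ≠ i.val := fun h => hj2 (Fin.ext h)
      have := j.isLt
      rw [Finset.mem_Icc]; omega
  rw [← herase, hdiag, ← hsplit, g_one]
  linarith

open Matrix in
theorem stmt5 (α : ℝ) (hα₁ : 1 < α) (hα₂ : α < 2) (n : ℕ) (hn : 1 ≤ n) :
    ∀ x : Fin n → ℝ, x ≠ 0 → x ⬝ᵥ (Gmat α n *ᵥ x) < 0 := by
  intro x hx
  obtain ⟨i0, hi0⟩ : ∃ i, x i ≠ 0 := by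
    by_contra h; push_neg at h; exact hx (funext h)
  have hA : ∀ i j : Fin n, Gmat α n i j = gSymb α (((i:ℤ) - (j:ℤ)).natAbs) :=
    fun i j => rfl
  have hAsym : ∀ i j : Fin n, Gmat α n i j = Gmat α n j i := by
    intro i j
    rw [hA, hA]
    congr 1
    omega
  have hAnn : ∀ i j : Fin n, i ≠ j → 0 ≤ Gmat α n i j := by
    intro i j hij
    rw [hA]
    have h1 : 1 ≤ (((i:ℤ) - (j:ℤ)).natAbs) := by
      have : i.val ≠ j.val := fun h => hij (Fin.ext h)
      omega
    exact (gSymb_pos hα₁ hα₂ _ h1).le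
  have hQ : x ⬝ᵥ (Gmat α n *ᵥ x) = ∑ i, ∑ j, x i * (Gmat α n i j * x j) := by
    simp [dotProduct, Matrix.mulVec, Finset.mul_sum]
  rw [hQ]
  have step1 : ∑ i, ∑ j, x i * (Gmat α n i j * x j)
      ≤ ∑ i, ∑ j, Gmat α n i j * ((x i)^2 + (x j)^2) / 2 := by
    apply Finset.sum_le_sum; intro i _
    apply Finset.sum_le_sum; intro j _
    rcases eq_or_ne i j with rfl | hij
    · apply le_of_eq; ring
    · have h0 := hAnn i j hij
      nlinarith [sq_nonneg (x i - x j), mul_nonneg h0 (sq_nonneg (x i - x j))]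
  have hswap : ∑ i, ∑ j, Gmat α n i j * (x j)^2
      = ∑ i, ∑ j, Gmat α n i j * (x i)^2 := by
    rw [Finset.sum_comm]
    exact Finset.sum_congr rfl fun i _ => Finset.sum_congr rfl fun j _ => by
      rw [hAsym j i]
  have step2 : ∑ i, ∑ j, Gmat α n i j * ((x i)^2 + (x j)^2) / 2
      = ∑ i, (∑ j, Gmat α n i j) * (x i)^2 := by
    have e1 : ∀ i : Fin n, ∑ j, Gmat α n i j * ((x i)^2 + (x j)^2) / 2
        = (∑ j, Gmat α n i j * (x i)^2) / 2 + (∑ j, Gmat α n i j * (x j)^2) / 2 := by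
      intro i
      rw [← add_div, ← Finset.sum_add_distrib, Finset.sum_div]
      exact Finset.sum_congr rfl fun j _ => by ring
    rw [Finset.sum_congr rfl fun i _ => e1 i, Finset.sum_add_distrib,
      ← Finset.sum_div, ← Finset.sum_div, hswap, ← add_div,
      add_self_div_two]
    exact Finset.sum_congr rfl fun i _ => (Finset.sum_mul _ _ _).symm
  have step3 : ∑ i, (∑ j, Gmat α n i j) * (x i)^2 < 0 := by
    have hrow : ∀ i : Fin n, (∑ j, Gmat α n i j) < 0 := by
      intro i
      have := row_neg hα₁ hα₂ i
      simpa [hA] using this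
    have h0 : (0:ℝ) = ∑ _i : Fin n, (0:ℝ) := by simp
    rw [h0]
    apply Finset.sum_lt_sum
    · intro i _
      exact mul_nonpos_of_nonpos_of_nonneg (hrow i).le (sq_nonneg _)
    · exact ⟨i0, Finset.mem_univ i0,
        mul_neg_of_neg_of_pos (hrow i0) (by positivity)⟩
  calc ∑ i, ∑ j, x i * (Gmat α n i j * x j)
      ≤ ∑ i, ∑ j, Gmat α n i j * ((x i)^2 + (x j)^2) / 2 := step1
    _ = ∑ i, (∑ j, Gmat α n i j) * (x i)^2 := step2
    _ < 0 := step3
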